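/- Let A be a complete normed algebra over ℂ with unit, let x, y ∈ A, and let c ∈ ℂ. If the commutator satisfies x·y − y·x = c • y, then exp(x) · y = exp(c) • (y · exp(x)); equivalently, exp(x) · y · exp(−x) = exp(c) • y. -/

import Mathlib

open NormedSpace

/-- In a complete normed unital `ℂ`-algebra, if `x·y − y·x = c • y`, then
`exp(x)·y = exp(c) • (y·exp(x))`; equivalently `exp(x)·y·exp(−x) = exp(c) • y`. -/
theorem exp_conj_of_commutator_smul {A : Type*} [NormedRing A] [NormedAlgebra ℂ A]
    [CompleteSpace A] (x y : A) (c : ℂ) (h : x * y - y * x = c • y) :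
    NormedSpace.exp x * y = Complex.exp c • (y * NormedSpace.exp x) ∧
      NormedSpace.exp x * y * NormedSpace.exp (-x) = Complex.exp c • y := by
  have hxy : x * y = y * (x + c • 1) := by
    rw [mul_add, mul_smul_comm, mul_one]
    exact sub_eq_iff_eq_add'.mp h
  have hpow : ∀ n : ℕ, x ^ n * y = y * (x + c • 1) ^ n := by
    intro n
    induction n with
    | zero => simp
    | succ n ih =>
      rw [pow_succ, pow_succ, mul_assoc, hxy, ← mul_assoc, ih, mul_assoc]
  have key : NormedSpace.exp x * y = y * NormedSpace.exp (x + c • 1) := by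
    simp only [exp_eq_tsum (𝕂 := ℂ)]
    rw [ ← (expSeries_summable' (𝕂 := ℂ) x).tsum_mul_right y,
      ← (expSeries_summable' (𝕂 := ℂ) (x + c • 1)).tsum_mul_left y]
    congr 1
    ext n
    rw [smul_mul_assoc, hpow n, mul_smul_comm]
  have hc1 : (c • 1 : A) = algebraMap ℂ A c := by
    rw [Algebra.algebraMap_eq_smul_one]
  have hcomm : Commute x ((c : ℂ) • (1 : A)) := by
    rw [hc1]; exact Algebra.commute_algebraMap_right c x
  have hsplit : NormedSpace.exp (x + c • 1)
      = Complex.exp c • NormedSpace.exp x := by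
    rw [exp_add_of_commute_of_mem_ball (𝕂 := ℂ) hcomm ((expSeries_radius_eq_top ℂ A).symm ▸ edist_lt_top _ _) ((expSeries_radius_eq_top ℂ A).symm ▸ edist_lt_top _ _), hc1, ← algebraMap_exp_comm,
      Algebra.algebraMap_eq_smul_one, mul_smul_comm, mul_one, Complex.exp_eq_exp_ℂ]
  have h1 : NormedSpace.exp x * y = Complex.exp c • (y * NormedSpace.exp x) := by
    rw [key, hsplit, mul_smul_comm]
  refine ⟨h1, ?_⟩
  rw [h1, smul_mul_assoc, mul_assoc, ← exp_add_of_commute_of_mem_ball (𝕂 := ℂ) (Commute.refl x).neg_right ((expSeries_radius_eq_top ℂ A).symm ▸ edist_lt_top _ _) ((expSeries_radius_eq_top ℂ A).symm ▸ edist_lt_top _ _),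
    add_neg_cancel, exp_zero, mul_one]
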